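/- arXiv:1301.6251 — 3 statements merged into one kernel-verified Lean document; each statement's English description precedes it below -/
import Mathlib

section
/- Let n = p^s with p prime and s ≥ 1. Then ν(n) = ξ(n) = p^{s−1}, and the ring of constants k[X]^d is a polynomial ring over k in p^{s−1} variables, i.e. k[X]^d is generated as a k-algebra by p^{s−1} elements that are algebraically independent over k. -/
set_option linter.unusedSectionVars false


open MvPolynomial

/-- The monoid `M_n` of all `α ∈ ℕ^n` with `α_0 + α_1 ε + ⋯ + α_{n-1} ε^{n-1} = 0`. -/
def cycMonoid (n : ℕ) {k : Type*} [Field k] (ε : k) : Set (Fin n → ℕ) :=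
  {α | ∑ i : Fin n, (α i : k) * ε ^ (i : ℕ) = 0}

/-- The set of minimal elements of `M_n`: nonzero elements that are not the sum of two
nonzero elements of `M_n`. -/
def cycMinimal (n : ℕ) {k : Type*} [Field k] (ε : k) : Set (Fin n → ℕ) :=
  {α ∈ cycMonoid n ε | α ≠ 0 ∧
    ¬∃ β γ : Fin n → ℕ, β ∈ cycMonoid n ε ∧ γ ∈ cycMonoid n ε ∧ β ≠ 0 ∧ γ ≠ 0 ∧ α = β + γ}

section Helpers

variable {k : Type*} [Field k] [CharZero k]

lemma sum_range_mul_eq {M : Type*} [AddCommMonoid M] (f : ℕ → M) {pp m : ℕ} (hm : 0 < m) :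
    ∑ i ∈ Finset.range (m * pp), f i
      = ∑ b ∈ Finset.range pp, ∑ a ∈ Finset.range m, f (b * m + a) := by
  rw [← Finset.sum_product']
  apply Finset.sum_nbij' (i := fun x : ℕ => ((x / m, x % m) : ℕ × ℕ))
    (j := fun x : ℕ × ℕ => x.1 * m + x.2)
  · intro a ha
    simp only [Finset.mem_range] at ha
    simp only [Finset.mem_product, Finset.mem_range]
    exact ⟨Nat.div_lt_of_lt_mul (by omega), Nat.mod_lt _ hm⟩
  · intro x hx
    simp only [Finset.mem_product, Finset.mem_range] at hx
    simp only [Finset.mem_range]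
    calc x.1 * m + x.2 < x.1 * m + m := by omega
    _ = (x.1 + 1) * m := by ring
    _ ≤ pp * m := Nat.mul_le_mul_right _ (by omega)
    _ = m * pp := Nat.mul_comm _ _
  · intro a ha
    simp [Nat.div_add_mod, Nat.mul_comm]
  · intro x hx
    simp only [Finset.mem_product, Finset.mem_range] at hx
    have h1 : (x.1 * m + x.2) / m = x.1 := by
      rw [Nat.add_comm, Nat.mul_comm, Nat.add_mul_div_left _ _ hm, Nat.div_eq_of_lt hx.2,
        Nat.zero_add]
    have h2 : (x.1 * m + x.2) % m = x.2 := by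
      rw [Nat.mul_comm, Nat.mul_add_mod, Nat.mod_eq_of_lt hx.2]
    exact Prod.ext h1 h2
  · intro a ha
    simp only
    rw [Nat.mul_comm, Nat.div_add_mod]


lemma n_eq_mp {p s : ℕ} (hs : 1 ≤ s) : p ^ s = p ^ (s - 1) * p := by
  conv_lhs => rw [← Nat.succ_pred_eq_of_pos hs]
  rw [pow_succ, Nat.pred_eq_sub_one]

lemma sum_eps_eq_zero {n p s : ℕ} (hp : p.Prime) (hs : 1 ≤ s) (hn : n = p ^ s)
    (ε : k) (hε : IsPrimitiveRoot ε n) (c : ℕ → k)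
    (hc : ∀ i < n, c i = c (i % (p ^ (s - 1)))) :
    ∑ i ∈ Finset.range n, c i * ε ^ i = 0 := by
  set m := p ^ (s - 1) with hm
  have hm0 : 0 < m := pow_pos hp.pos _
  have hmp : n = m * p := by rw [hn, hm, n_eq_mp hs]
  have hmn : m < n := by
    rw [hmp]; have := hp.two_le; nlinarith
  have key : ∑ b ∈ Finset.range p, (ε ^ m) ^ b = 0 := by
    have h1 : (ε ^ m) ≠ 1 := hε.pow_ne_one_of_pos_of_lt hm0.ne' hmn
    have h2 : (ε ^ m) ^ p = 1 := by
      rw [← pow_mul, ← hmp]; exact hε.pow_eq_one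
    rw [geom_sum_eq h1, h2, sub_self, zero_div]
  calc ∑ i ∈ Finset.range n, c i * ε ^ i
      = ∑ b ∈ Finset.range p, ∑ a ∈ Finset.range m, c (b * m + a) * ε ^ (b * m + a) := by
        rw [hmp]; exact sum_range_mul_eq _ hm0
    _ = ∑ b ∈ Finset.range p, ∑ a ∈ Finset.range m, (ε ^ m) ^ b * (c a * ε ^ a) := by
        refine Finset.sum_congr rfl fun b hb => Finset.sum_congr rfl fun a ha => ?_
        simp only [Finset.mem_range] at hb ha
        have hlt : b * m + a < n := by
          rw [hmp]
          calc b * m + a < b * m + m := by omega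
          _ = (b + 1) * m := by ring
          _ ≤ p * m := Nat.mul_le_mul_right _ (by omega)
          _ = m * p := Nat.mul_comm _ _
        have : c (b * m + a) = c a := by
          rw [hc _ hlt, Nat.mul_comm b m, Nat.mul_add_mod, Nat.mod_eq_of_lt ha]
        rw [this, pow_add, pow_mul]
        ring
    _ = (∑ b ∈ Finset.range p, (ε ^ m) ^ b) * (∑ a ∈ Finset.range m, c a * ε ^ a) := by
        rw [Finset.sum_mul]
        exact Finset.sum_congr rfl fun b _ => (Finset.mul_sum _ _ _).symm
    _ = 0 := by rw [key, zero_mul]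

lemma const_of_sum_eps_eq_zero {n p s : ℕ} (hp : p.Prime) (hs : 1 ≤ s) (hn : n = p ^ s)
    (ε : k) (hε : IsPrimitiveRoot ε n) (β : ℕ → ℕ)
    (h0 : ∑ i ∈ Finset.range n, (β i : k) * ε ^ i = 0) :
    ∀ i < n, β i = β (i % (p ^ (s - 1))) := by
  set m := p ^ (s - 1) with hm
  have hm0 : 0 < m := pow_pos hp.pos _
  have hmp : n = m * p := by rw [hn, hm, n_eq_mp hs]
  have hmn : m < n := by rw [hmp]; have := hp.two_le; nlinarith
  have hn0 : 0 < n := by omega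
  set q : ℕ → ℚ := fun i => (β i : ℚ) - (β (i % m) : ℚ) with hq
  set P : Polynomial ℚ := ∑ i ∈ Finset.range n, Polynomial.monomial i (q i) with hP
  have hcoeff : ∀ j, P.coeff j = if j < n then q j else 0 := by
    intro j
    rw [hP, Polynomial.finset_sum_coeff]
    simp only [Polynomial.coeff_monomial]
    rw [Finset.sum_ite_eq' (Finset.range n) j q]
    simp [Finset.mem_range]
  have haev : Polynomial.aeval ε P = 0 := by
    rw [hP, map_sum]
    have : ∀ i ∈ Finset.range n,
        Polynomial.aeval ε (Polynomial.monomial i (q i))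
          = (β i : k) * ε ^ i - (β (i % m) : k) * ε ^ i := by
      intro i _
      rw [Polynomial.aeval_monomial, hq]
      push_cast
      ring
    rw [Finset.sum_congr rfl this, Finset.sum_sub_distrib, h0,
      sum_eps_eq_zero hp hs hn ε hε (fun i => (β (i % m) : k))
        (fun i _ => by rw [← hm, Nat.mod_mod_of_dvd _ dvd_rfl]), sub_zero]
  have hP0 : P = 0 := by
    by_contra hne
    have hdvd : Polynomial.cyclotomic n ℚ ∣ P := by
      rw [Polynomial.cyclotomic_eq_minpoly_rat hε hn0]
      exact minpoly.dvd ℚ ε haev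
    obtain ⟨Q, hQ⟩ := hdvd
    have hcyc0 : Polynomial.cyclotomic n ℚ ≠ 0 := Polynomial.cyclotomic_ne_zero n ℚ
    have hQ0 : Q ≠ 0 := by rintro rfl; rw [mul_zero] at hQ; exact hne hQ
    have hndc : (Polynomial.cyclotomic n ℚ).natDegree = n - m := by
      rw [Polynomial.natDegree_cyclotomic, hn, Nat.totient_prime_pow hp hs, ← hm,
        Nat.mul_sub, Nat.mul_one, ← hmp, ← hn]
    have hndP : P.natDegree ≤ n - 1 := by
      rw [Polynomial.natDegree_le_iff_coeff_eq_zero]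
      intro N hN
      rw [hcoeff]
      simp only [ite_eq_right_iff]
      intro h; omega
    have hndmul : P.natDegree = (n - m) + Q.natDegree := by
      rw [hQ, Polynomial.natDegree_mul hcyc0 hQ0, hndc]
    have hlow : ∀ j < m, P.coeff j = 0 := by
      intro j hj
      rw [hcoeff, if_pos (lt_trans hj hmn), hq]
      simp [Nat.mod_eq_of_lt hj]
    have htP : m ≤ P.natTrailingDegree := Polynomial.le_natTrailingDegree hne hlow
    have htc : (Polynomial.cyclotomic n ℚ).natTrailingDegree = 0 := by
      rw [Polynomial.natTrailingDegree_eq_zero]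
      right
      rw [Polynomial.cyclotomic_coeff_zero _ (by omega)]
      exact one_ne_zero
    have htmul : P.natTrailingDegree = Q.natTrailingDegree := by
      rw [hQ, Polynomial.natTrailingDegree_mul hcyc0 hQ0, htc, Nat.zero_add]
    have := Polynomial.natTrailingDegree_le_natDegree Q
    omega
  intro i hi
  have hci := hcoeff i
  rw [hP0, Polynomial.coeff_zero, if_pos hi] at hci
  simp only [hq] at hci
  have h2 : (β i : ℚ) = (β (i % m) : ℚ) := sub_eq_zero.mp hci.symm
  exact_mod_cast h2


lemma mem_cycMonoid_iff {n p s : ℕ} (hp : p.Prime) (hs : 1 ≤ s) (hn : n = p ^ s)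
    {ε : k} (hε : IsPrimitiveRoot ε n) (α : Fin n → ℕ) :
    α ∈ cycMonoid n ε ↔
      ∀ i : Fin n, α i = α ⟨(i : ℕ) % (p ^ (s - 1)),
        lt_of_le_of_lt (Nat.mod_le _ _) i.isLt⟩ := by
  set m := p ^ (s - 1) with hm
  set β : ℕ → ℕ := fun i => if h : i < n then α ⟨i, h⟩ else 0 with hβ
  have hβval : ∀ i : Fin n, β (i : ℕ) = α i := by
    intro i
    simp only [hβ, dif_pos i.isLt]
  have hβval' : ∀ (x : ℕ) (hx : x < n), β x = α ⟨x, hx⟩ := fun x hx => dif_pos hx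
  have hsum : ∑ i : Fin n, (α i : k) * ε ^ (i : ℕ)
      = ∑ i ∈ Finset.range n, (β i : k) * ε ^ i := by
    rw [← Fin.sum_univ_eq_sum_range (fun i => (β i : k) * ε ^ i) n]
    exact Finset.sum_congr rfl fun i _ => by rw [hβval]
  constructor
  · intro h i
    have h0 : ∑ i ∈ Finset.range n, (β i : k) * ε ^ i = 0 := by rw [← hsum]; exact h
    have key := const_of_sum_eps_eq_zero hp hs hn ε hε β h0 (i : ℕ) i.isLt
    rw [hβval] at key
    rw [key]
    exact hβval' _ _
  · intro h
    show ∑ i : Fin n, (α i : k) * ε ^ (i : ℕ) = 0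
    rw [hsum]
    apply sum_eps_eq_zero hp hs hn ε hε
    intro i hi
    have := h ⟨i, hi⟩
    simp only [hβ]
    rw [dif_pos hi, dif_pos (lt_of_le_of_lt (Nat.mod_le _ _) hi)]
    exact_mod_cast this

lemma cycMinimal_eq {n p s : ℕ} (hp : p.Prime) (hs : 1 ≤ s) (hn : n = p ^ s)
    {ε : k} (hε : IsPrimitiveRoot ε n) :
    cycMinimal n ε = Set.range (fun (r : Fin (p ^ (s - 1))) (i : Fin n) =>
      if (i : ℕ) % (p ^ (s - 1)) = (r : ℕ) then 1 else 0) := by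
  set m := p ^ (s - 1) with hm
  have hm0 : 0 < m := pow_pos hp.pos _
  have hmp : n = m * p := by rw [hn, hm, n_eq_mp hs]
  have hmn : m < n := by rw [hmp]; have := hp.two_le; nlinarith
  set E : Fin m → Fin n → ℕ :=
    fun r i => if (i : ℕ) % m = (r : ℕ) then 1 else 0 with hE
  -- constancy on classes for monoid elements
  have hconst : ∀ α ∈ cycMonoid n ε, ∀ i j : Fin n,
      (i : ℕ) % m = (j : ℕ) % m → α i = α j := by
    intro α hα i j hij
    have h1 := (mem_cycMonoid_iff hp hs hn hε α).mp hα i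
    have h2 := (mem_cycMonoid_iff hp hs hn hε α).mp hα j
    rw [h1, h2]
    congr 1
    exact Fin.ext hij
  have hEmem : ∀ r, E r ∈ cycMonoid n ε := by
    intro r
    rw [mem_cycMonoid_iff hp hs hn hε]
    intro i
    simp only [hE]
    rw [Nat.mod_mod_of_dvd _ dvd_rfl]
  have hidx : ∀ r : Fin m, ((r : ℕ)) < n := fun r => lt_trans r.isLt hmn
  have hEval1 : ∀ r : Fin m, E r ⟨(r : ℕ), hidx r⟩ = 1 := by
    intro r
    simp only [hE]
    rw [if_pos (Nat.mod_eq_of_lt r.isLt)]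
  have hEne : ∀ r, E r ≠ 0 := by
    intro r h
    have := congrFun h ⟨(r : ℕ), hidx r⟩
    rw [hEval1 r] at this
    exact one_ne_zero this
  ext α
  simp only [Set.mem_range]
  constructor
  · rintro ⟨hα, hα0, hdec⟩
    -- pick i0 with α i0 ≠ 0
    have hex : ∃ i : Fin n, α i ≠ 0 := by
      by_contra hno
      push_neg at hno
      exact hα0 (funext fun i => hno i)
    obtain ⟨i0, hi0⟩ := hex
    refine ⟨⟨(i0 : ℕ) % m, Nat.mod_lt _ hm0⟩, ?_⟩
    -- claim α = E r with r = i0 % m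
    set r : Fin m := ⟨(i0 : ℕ) % m, Nat.mod_lt _ hm0⟩ with hr
    by_contra hne
    -- α - E r is in the monoid
    have hge : ∀ i : Fin n, E r i ≤ α i := by
      intro i
      simp only [hE]
      by_cases hc : (i : ℕ) % m = (r : ℕ)
      · rw [if_pos hc]
        have : α i = α i0 := hconst α hα i i0 (by rw [hc])
        omega
      · rw [if_neg hc]; exact Nat.zero_le _
    have hsubmem : (α - E r) ∈ cycMonoid n ε := by
      rw [mem_cycMonoid_iff hp hs hn hε]
      intro i
      have h1 := (mem_cycMonoid_iff hp hs hn hε α).mp hα i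
      have h2 := (mem_cycMonoid_iff hp hs hn hε (E r)).mp (hEmem r) i
      show α i - E r i = α _ - E r _
      rw [← h1, ← h2]
    have hsub0 : α - E r ≠ 0 := by
      intro h
      apply hne
      funext i
      have h3 := congrFun h i
      have h4 := hge i
      show E r i = α i
      simp only [Pi.sub_apply, Pi.zero_apply] at h3
      omega
    exact absurd ⟨E r, α - E r, hEmem r, hsubmem, hEne r, hsub0, by
      funext i
      simp only [Pi.add_apply, Pi.sub_apply]
      have := hge i
      omega⟩ hdec
  · rintro ⟨r, rfl⟩
    refine ⟨hEmem r, hEne r, ?_⟩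
    rintro ⟨β, γ, hβm, hγm, hβ0, hγ0, hsum⟩
    -- β is nonzero somewhere
    have hexβ : ∃ i : Fin n, β i ≠ 0 := by
      by_contra hno; push_neg at hno; exact hβ0 (funext fun i => hno i)
    have hexγ : ∃ i : Fin n, γ i ≠ 0 := by
      by_contra hno; push_neg at hno; exact hγ0 (funext fun i => hno i)
    obtain ⟨i1, hi1⟩ := hexβ
    obtain ⟨i2, hi2⟩ := hexγ
    have hs1 := congrFun hsum i1
    have hs2 := congrFun hsum i2
    simp only [Pi.add_apply, hE] at hs1 hs2
    -- both i1 i2 in class r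
    have hc1 : (i1 : ℕ) % m = (r : ℕ) := by
      by_contra hc
      rw [if_neg hc] at hs1
      omega
    have hc2 : (i2 : ℕ) % m = (r : ℕ) := by
      by_contra hc
      rw [if_neg hc] at hs2
      omega
    rw [if_pos hc1] at hs1
    rw [if_pos hc2] at hs2
    have hββ : β i1 = β i2 := hconst β hβm i1 i2 (by rw [hc1, hc2])
    have hγγ : γ i1 = γ i2 := hconst γ hγm i1 i2 (by rw [hc1, hc2])
    omega

lemma cycMinimal_ncard {n p s : ℕ} (hp : p.Prime) (hs : 1 ≤ s) (hn : n = p ^ s)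
    {ε : k} (hε : IsPrimitiveRoot ε n) :
    (cycMinimal n ε).ncard = p ^ (s - 1) := by
  set m := p ^ (s - 1) with hm
  have hm0 : 0 < m := pow_pos hp.pos _
  have hmp : n = m * p := by rw [hn, hm, n_eq_mp hs]
  have hmn : m < n := by rw [hmp]; have := hp.two_le; nlinarith
  rw [cycMinimal_eq hp hs hn hε]
  rw [← Set.image_univ]
  rw [Set.ncard_image_of_injective _ ?_, Set.ncard_univ, Nat.card_eq_fintype_card,
    Fintype.card_fin]
  intro r r' h
  have h2 := congrFun h ⟨(r : ℕ), lt_trans r.isLt hmn⟩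
  simp only [] at h2
  rw [Nat.mod_eq_of_lt r.isLt, if_pos rfl] at h2
  by_contra hne
  rw [if_neg (fun hc => hne (Fin.ext hc))] at h2
  exact one_ne_zero h2

end Helpers

noncomputable section PartC

variable {k : Type*} [Field k] [CharZero k] {n : ℕ} [NeZero n]

/-- `ε ^ a.val` as a function on `ZMod n`. -/
def ee (ε : k) (a : ZMod n) : k := ε ^ a.val

variable {ε : k}

lemma epow_mod (hε : IsPrimitiveRoot ε n) (x : ℕ) : ε ^ (x % n) = ε ^ x := by
  conv_rhs => rw [← Nat.div_add_mod x n]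
  rw [pow_add, pow_mul, hε.pow_eq_one, one_pow, one_mul]

lemma ee_add (hε : IsPrimitiveRoot ε n) (a b : ZMod n) :
    ee ε (a + b) = ee ε a * ee ε b := by
  unfold ee
  rw [ZMod.val_add, epow_mod hε, pow_add]

lemma ee_zero : ee (n := n) ε 0 = 1 := by
  unfold ee
  rw [ZMod.val_zero, pow_zero]

lemma zmod_sum {M : Type*} [AddCommMonoid M] (f : ℕ → M) :
    ∑ j : ZMod n, f (ZMod.val j) = ∑ j ∈ Finset.range n, f j := by
  apply Finset.sum_nbij' (i := fun j : ZMod n => ZMod.val j)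
    (j := fun x : ℕ => (x : ZMod n))
  · intro a _
    exact Finset.mem_range.mpr (ZMod.val_lt a)
  · intro a _
    exact Finset.mem_univ _
  · intro a _
    exact ZMod.natCast_rightInverse a
  · intro a ha
    exact ZMod.val_cast_of_lt (Finset.mem_range.mp ha)
  · intro a _
    rfl

lemma ortho (hε : IsPrimitiveRoot ε n) (c : ZMod n) :
    ∑ j : ZMod n, ee ε (c * j) = if c = 0 then (n : k) else 0 := by
  by_cases hc : c = 0
  · subst hc
    rw [if_pos rfl]
    have : ∀ j : ZMod n, ee ε ((0 : ZMod n) * j) = 1 := by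
      intro j
      rw [zero_mul, ee_zero]
    rw [Finset.sum_congr rfl (fun j _ => this j), Finset.sum_const, Finset.card_univ,
      ZMod.card, nsmul_eq_mul, mul_one]
  · rw [if_neg hc]
    have h1 : ∀ j : ZMod n, ee ε (c * j) = (ε ^ c.val) ^ j.val := by
      intro j
      unfold ee
      rw [ZMod.val_mul, epow_mod hε, pow_mul]
    rw [Finset.sum_congr rfl (fun j _ => h1 j),
      zmod_sum (f := fun t => (ε ^ c.val) ^ t)]
    have hvne : c.val ≠ 0 := fun h => hc ((ZMod.val_eq_zero c).mp h)
    have hne : ε ^ c.val ≠ 1 :=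
      hε.pow_ne_one_of_pos_of_lt hvne (ZMod.val_lt c)
    rw [geom_sum_eq hne]
    have : (ε ^ c.val) ^ n = 1 := by
      rw [← pow_mul, Nat.mul_comm, pow_mul, hε.pow_eq_one, one_pow]
    rw [this, sub_self, zero_div]

/-- The eigenvector `y_j`. -/
def yv (ε : k) (j : ZMod n) : MvPolynomial (ZMod n) k :=
  ∑ i : ZMod n, C (ee ε (-(i * j))) * X i

/-- The inverse change of variables. -/
def zv (ε : k) (i : ZMod n) : MvPolynomial (ZMod n) k :=
  (n : k)⁻¹ • ∑ j : ZMod n, C (ee ε (i * j)) * X j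

lemma ncast_ne_zero : (n : k) ≠ 0 :=
  Nat.cast_ne_zero.mpr (NeZero.ne n)

lemma aeval_yv_zv (hε : IsPrimitiveRoot ε n) (i : ZMod n) :
    aeval (yv ε) (zv ε i) = X i := by
  unfold zv
  rw [map_smul, map_sum]
  simp only [map_mul, aeval_C, aeval_X]
  unfold yv
  have step1 : ∀ j : ZMod n,
      algebraMap k (MvPolynomial (ZMod n) k) (ee ε (i * j))
        * ∑ i' : ZMod n, C (ee ε (-(i' * j))) * X i'
      = ∑ i' : ZMod n, C (ee ε (i * j) * ee ε (-(i' * j))) * X i' := by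
    intro j
    rw [algebraMap_eq, Finset.mul_sum]
    exact Finset.sum_congr rfl fun i' _ => by rw [C_mul, mul_assoc]
  rw [Finset.sum_congr rfl (fun j _ => step1 j), Finset.sum_comm]
  have step2 : ∀ i' : ZMod n,
      ∑ j : ZMod n, C (ee ε (i * j) * ee ε (-(i' * j))) * X i'
      = C (if i - i' = 0 then (n : k) else 0) * X i' := by
    intro i'
    rw [← Finset.sum_mul, ← map_sum]
    congr 2
    rw [← ortho hε (i - i')]
    refine Finset.sum_congr rfl fun j _ => ?_
    rw [← ee_add hε]
    congr 1
    ring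
  rw [Finset.sum_congr rfl (fun i' _ => step2 i')]
  have step3 : ∀ i' : ZMod n,
      C (if i - i' = 0 then (n : k) else 0) * X i'
      = if i' = i then C (n : k) * X i' else 0 := by
    intro i'
    by_cases hc : i' = i
    · subst hc
      rw [if_pos (sub_self i'), if_pos rfl]
    · rw [if_neg (fun h => hc (by linear_combination -h)), if_neg hc, map_zero, zero_mul]
  rw [Finset.sum_congr rfl (fun i' _ => step3 i'), Finset.sum_ite_eq' Finset.univ i
    (fun i' => C (n : k) * X i'), if_pos (Finset.mem_univ i)]
  rw [← smul_eq_C_mul, smul_smul, inv_mul_cancel₀ ncast_ne_zero, one_smul]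

lemma aeval_zv_yv (hε : IsPrimitiveRoot ε n) (j : ZMod n) :
    aeval (zv ε) (yv ε j) = X j := by
  unfold yv
  rw [map_sum]
  simp only [map_mul, aeval_C, aeval_X]
  unfold zv
  have step1 : ∀ i : ZMod n,
      algebraMap k (MvPolynomial (ZMod n) k) (ee ε (-(i * j)))
        * ((n : k)⁻¹ • ∑ j' : ZMod n, C (ee ε (i * j')) * X j')
      = (n : k)⁻¹ • ∑ j' : ZMod n, C (ee ε (-(i * j)) * ee ε (i * j')) * X j' := by
    intro i
    rw [algebraMap_eq, mul_smul_comm, Finset.mul_sum]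
    congr 1
    exact Finset.sum_congr rfl fun j' _ => by rw [C_mul, mul_assoc]
  rw [Finset.sum_congr rfl (fun i _ => step1 i), ← Finset.smul_sum, Finset.sum_comm]
  have step2 : ∀ j' : ZMod n,
      ∑ i : ZMod n, C (ee ε (-(i * j)) * ee ε (i * j')) * X j'
      = if j' = j then C (n : k) * X j' else 0 := by
    intro j'
    rw [← Finset.sum_mul, ← map_sum]
    have : ∑ i : ZMod n, ee ε (-(i * j)) * ee ε (i * j')
        = if j' - j = 0 then (n : k) else 0 := by
      rw [← ortho hε (j' - j)]
      refine Finset.sum_congr rfl fun i _ => ?_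
      rw [← ee_add hε]
      congr 1
      ring
    rw [this]
    by_cases hc : j' = j
    · subst hc
      rw [if_pos (sub_self j'), if_pos rfl]
    · rw [if_neg (fun h => hc (by linear_combination h)), if_neg hc, map_zero, zero_mul]
  rw [Finset.sum_congr rfl (fun j' _ => step2 j'), Finset.sum_ite_eq' Finset.univ j
    (fun j' => C (n : k) * X j'), if_pos (Finset.mem_univ j)]
  rw [← smul_eq_C_mul, smul_smul, inv_mul_cancel₀ ncast_ne_zero, one_smul]

/-- The change-of-variables algebra automorphism. -/
def phiE (hε : IsPrimitiveRoot ε n) :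
    MvPolynomial (ZMod n) k ≃ₐ[k] MvPolynomial (ZMod n) k :=
  AlgEquiv.ofAlgHom (aeval (yv ε)) (aeval (zv ε))
    (algHom_ext fun i => by
      rw [AlgHom.comp_apply, aeval_X, aeval_yv_zv hε, AlgHom.id_apply])
    (algHom_ext fun j => by
      rw [AlgHom.comp_apply, aeval_X, aeval_zv_yv hε, AlgHom.id_apply])

lemma phiE_apply (hε : IsPrimitiveRoot ε n) (F : MvPolynomial (ZMod n) k) :
    phiE hε F = aeval (yv ε) F := rfl

variable {d : Derivation k (MvPolynomial (ZMod n) k) (MvPolynomial (ZMod n) k)}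

lemma d_yv (hd : ∀ j : ZMod n, d (X j) = X (j + 1)) (hε : IsPrimitiveRoot ε n)
    (j : ZMod n) : d (yv ε j) = ee ε j • yv ε j := by
  unfold yv
  rw [map_sum]
  have h1 : ∀ i : ZMod n, d (C (ee ε (-(i * j))) * X i)
      = C (ee ε (-(i * j))) * X (i + 1) := by
    intro i
    rw [← smul_eq_C_mul, d.map_smul, hd, smul_eq_C_mul]
  rw [Finset.sum_congr rfl (fun i _ => h1 i)]
  have h2 : ∑ i : ZMod n, C (ee ε (-(i * j))) * X (i + 1)
      = ∑ i : ZMod n, C (ee ε (-((i - 1) * j))) * X i := by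
    apply Fintype.sum_equiv (Equiv.addRight (1 : ZMod n))
    intro i
    simp only [Equiv.coe_addRight, add_sub_cancel_right]
  rw [h2, Finset.smul_sum]
  refine Finset.sum_congr rfl fun i _ => ?_
  rw [smul_eq_C_mul, ← mul_assoc, ← C_mul, ← ee_add hε]
  congr 2
  ring

/-- The diagonal derivation. -/
def deltaD (ε : k) : Derivation k (MvPolynomial (ZMod n) k) (MvPolynomial (ZMod n) k) :=
  mkDerivation k (fun j : ZMod n => ee ε j • X j)

lemma d_phi_comm (hd : ∀ j : ZMod n, d (X j) = X (j + 1)) (hε : IsPrimitiveRoot ε n)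
    (G : MvPolynomial (ZMod n) k) :
    d (aeval (yv ε) G) = aeval (yv ε) (deltaD ε G) := by
  induction G using MvPolynomial.induction_on with
  | C a =>
      rw [aeval_C, Derivation.map_algebraMap]
      unfold deltaD
      rw [show ((C a : MvPolynomial (ZMod n) k)) = algebraMap k _ a from rfl,
        Derivation.map_algebraMap, map_zero]
  | add G1 G2 hG1 hG2 =>
      rw [map_add, map_add, hG1, hG2, map_add, map_add]
  | mul_X G i hG =>
      have hδ : deltaD (n := n) ε (G * X i)
          = G * (C (ee ε i) * X i) + X i * deltaD ε G := by
        rw [deltaD, Derivation.leibniz, mkDerivation_X, smul_eq_mul, smul_eq_mul,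
          smul_eq_C_mul]
      rw [map_mul, aeval_X, Derivation.leibniz, smul_eq_mul, smul_eq_mul, d_yv hd hε, hG,
        hδ, map_add, map_mul, map_mul, map_mul, aeval_X, aeval_C, smul_eq_C_mul,
        algebraMap_eq]

/-- `H_α(ε)`. -/
def Hval (ε : k) (α : ZMod n →₀ ℕ) : k := ∑ j : ZMod n, (α j : k) * ee ε j

lemma deltaD_monomial (α : ZMod n →₀ ℕ) (c : k) :
    deltaD ε (monomial α c) = Hval ε α • monomial α c := by
  rw [deltaD, mkDerivation_monomial]
  have hterm : ∀ j ∈ α.support,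
      monomial (α - Finsupp.single j 1) ((α j : k)) • (ee ε j • X j)
        = monomial α ((α j : k) * ee ε j) := by
    intro j hj
    rw [smul_comm, smul_eq_mul, X, monomial_mul, mul_one]
    have hle : Finsupp.single j 1 ≤ α := by
      rw [Finsupp.single_le_iff, Nat.succ_le_iff, pos_iff_ne_zero,
        ← Finsupp.mem_support_iff]
      exact hj
    rw [tsub_add_cancel_of_le hle, smul_monomial, smul_eq_mul, mul_comm]
  rw [Finsupp.sum, Finset.sum_congr rfl hterm, ← map_sum (monomial α)]
  have hext : ∑ j ∈ α.support, (α j : k) * ee ε j = Hval ε α := by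
    rw [Hval]
    apply Finset.sum_subset (Finset.subset_univ _)
    intro j _ hj
    rw [Finsupp.notMem_support_iff.mp hj]
    rw [Nat.cast_zero, zero_mul]
  rw [hext, smul_monomial, smul_monomial]
  rw [smul_eq_mul, smul_eq_mul, mul_comm]

lemma coeff_deltaD (F : MvPolynomial (ZMod n) k) (β : ZMod n →₀ ℕ) :
    coeff β (deltaD ε F) = Hval ε β * coeff β F := by
  induction F using MvPolynomial.induction_on' with
  | monomial α a =>
      rw [deltaD_monomial, coeff_smul, coeff_monomial]
      by_cases h : α = β
      · subst h
        rw [smul_eq_mul]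
      · rw [if_neg h, smul_zero, mul_zero]
  | add F1 F2 h1 h2 =>
      rw [map_add, coeff_add, coeff_add, h1, h2, mul_add]

/-- The exponent vector of the `r`-th generator. -/
def Er (n m : ℕ) [NeZero n] (r : Fin m) : ZMod n →₀ ℕ :=
  Finsupp.equivFunOnFinite.symm (fun j => if ZMod.val j % m = (r : ℕ) then 1 else 0)

lemma Er_apply {m : ℕ} (r : Fin m) (j : ZMod n) :
    Er n m r j = if ZMod.val j % m = (r : ℕ) then 1 else 0 :=
  Finsupp.equivFunOnFinite_symm_apply_apply _ _

lemma Hval_eq_sum_range (α : ZMod n →₀ ℕ) :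
    Hval ε α = ∑ t ∈ Finset.range n, (α ((t : ZMod n)) : k) * ε ^ t := by
  rw [Hval, ← zmod_sum (f := fun t => (α ((t : ZMod n)) : k) * ε ^ t)]
  refine Finset.sum_congr rfl fun j _ => ?_
  rw [ZMod.natCast_rightInverse j]
  rfl

lemma Hval_zero_of_const {p s : ℕ} (hp : p.Prime) (hs : 1 ≤ s) (hn : n = p ^ s)
    (hε : IsPrimitiveRoot ε n) (α : ZMod n →₀ ℕ)
    (hc : ∀ j : ZMod n, α j = α (((ZMod.val j % p ^ (s - 1) : ℕ)) : ZMod n)) :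
    Hval ε α = 0 := by
  rw [Hval_eq_sum_range]
  apply sum_eps_eq_zero hp hs hn ε hε
  intro i hi
  have hv : ZMod.val ((i : ZMod n)) = i := ZMod.val_cast_of_lt hi
  rw [hc ((i : ZMod n)), hv]

lemma const_of_Hval_zero {p s : ℕ} (hp : p.Prime) (hs : 1 ≤ s) (hn : n = p ^ s)
    (hε : IsPrimitiveRoot ε n) (α : ZMod n →₀ ℕ) (h : Hval ε α = 0) :
    ∀ j : ZMod n, α j = α (((ZMod.val j % p ^ (s - 1) : ℕ)) : ZMod n) := by
  have key := const_of_sum_eps_eq_zero hp hs hn ε hε (fun t => α ((t : ZMod n)))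
    (by rw [← Hval_eq_sum_range]; exact h)
  intro j
  have hj := key (ZMod.val j) (ZMod.val_lt j)
  rw [ZMod.natCast_rightInverse j] at hj
  exact hj

/-- The subalgebra of constants of a derivation. -/
def constAlg (D : Derivation k (MvPolynomial (ZMod n) k) (MvPolynomial (ZMod n) k)) :
    Subalgebra k (MvPolynomial (ZMod n) k) where
  carrier := {F | D F = 0}
  mul_mem' := fun {a b} ha hb => by
    show D (a * b) = 0
    rw [D.leibniz, Set.mem_setOf_eq.mp ha, Set.mem_setOf_eq.mp hb, smul_zero, smul_zero,
      add_zero]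
  one_mem' := D.map_one_eq_zero
  add_mem' := fun {a b} ha hb => by
    show D (a + b) = 0
    rw [map_add, Set.mem_setOf_eq.mp ha, Set.mem_setOf_eq.mp hb, add_zero]
  zero_mem' := map_zero D
  algebraMap_mem' := fun r => D.map_algebraMap r

lemma partC {p s : ℕ} (hp : p.Prime) (hs : 1 ≤ s) (hn : n = p ^ s)
    (hε : IsPrimitiveRoot ε n)
    (d : Derivation k (MvPolynomial (ZMod n) k) (MvPolynomial (ZMod n) k))
    (hd : ∀ j : ZMod n, d (X j) = X (j + 1)) :
    ∃ f : Fin (p ^ (s - 1)) → MvPolynomial (ZMod n) k,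
      AlgebraicIndependent k f ∧
      {F : MvPolynomial (ZMod n) k | d F = 0} = ↑(Algebra.adjoin k (Set.range f)) := by
  set m := p ^ (s - 1) with hm
  have hm0 : 0 < m := pow_pos hp.pos _
  have hmp : n = m * p := by rw [hn, hm, n_eq_mp hs]
  have hmn : m < n := by rw [hmp]; have := hp.two_le; nlinarith
  set g : Fin m → MvPolynomial (ZMod n) k := fun r => monomial (Er n m r) 1 with hg
  -- pointwise formula for ∑ r, c r • Er r
  have hTapply : ∀ (c : Fin m → ℕ) (j : ZMod n),
      (∑ r : Fin m, c r • Er n m r) j = c ⟨ZMod.val j % m, Nat.mod_lt _ hm0⟩ := by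
    intro c j
    rw [Finsupp.finset_sum_apply]
    have h1 : ∀ r : Fin m, (c r • Er n m r) j
        = if r = ⟨ZMod.val j % m, Nat.mod_lt _ hm0⟩ then c r else 0 := by
      intro r
      rw [Finsupp.smul_apply, Er_apply, smul_eq_mul]
      by_cases hcase : ZMod.val j % m = (r : ℕ)
      · rw [if_pos hcase, if_pos (show r = ⟨ZMod.val j % m, Nat.mod_lt _ hm0⟩ from Fin.ext hcase.symm), mul_one]
      · rw [if_neg hcase, if_neg (fun h : r = ⟨ZMod.val j % m, Nat.mod_lt _ hm0⟩ =>
          hcase (by rw [h])), mul_zero]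
    rw [Finset.sum_congr rfl (fun r _ => h1 r), Finset.sum_ite_eq' Finset.univ _ c,
      if_pos (Finset.mem_univ _)]
  have hval_cast : ∀ r : Fin m, ZMod.val (((r : ℕ) : ZMod n)) = (r : ℕ) :=
    fun r => ZMod.val_cast_of_lt (lt_trans r.isLt hmn)
  -- aeval of monomials under g
  have haev_mon : ∀ (c : Fin m →₀ ℕ) (a : k),
      aeval g (monomial c a) = monomial (∑ r : Fin m, c r • Er n m r) a := by
    intro c a
    rw [aeval_monomial]
    have h1 : (c.prod fun r e => g r ^ e) = ∏ r : Fin m, g r ^ c r := by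
      rw [Finsupp.prod]
      apply Finset.prod_subset (Finset.subset_univ _)
      intro r _ hr
      rw [Finsupp.notMem_support_iff.mp hr, pow_zero]
    have h2 : ∀ r : Fin m, g r ^ c r = monomial (c r • Er n m r) (1 : k) := by
      intro r
      rw [hg]
      simp only []
      rw [monomial_pow, one_pow]
    rw [h1, Finset.prod_congr rfl (fun r _ => h2 r), ← monomial_sum_one,
      algebraMap_eq, C_mul_monomial, mul_one]
  -- injectivity of the exponent map
  have hT_inj : ∀ c c' : Fin m →₀ ℕ,
      (∑ r : Fin m, c r • Er n m r) = (∑ r : Fin m, c' r • Er n m r) → c = c' := by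
    intro c c' h
    ext r
    have h2 := congrArg (fun v : ZMod n →₀ ℕ => v (((r : ℕ) : ZMod n))) h
    rw [hTapply, hTapply] at h2
    have h3 : (⟨ZMod.val (((r : ℕ) : ZMod n)) % m, Nat.mod_lt _ hm0⟩ : Fin m) = r := by
      apply Fin.ext
      simp only []
      rw [hval_cast r, Nat.mod_eq_of_lt r.isLt]
    rw [h3] at h2
    exact h2
  -- algebraic independence of g
  have hAI : AlgebraicIndependent k g := by
    have hinj : Function.Injective
        (aeval g : MvPolynomial (Fin m) k →ₐ[k] MvPolynomial (ZMod n) k) := by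
      rw [injective_iff_map_eq_zero]
      intro P hP
      by_contra hP0
      obtain ⟨c₀, hc₀⟩ := support_nonempty.mpr hP0
      have hexp : aeval g P
          = ∑ c ∈ P.support, monomial (∑ r : Fin m, c r • Er n m r) (coeff c P) := by
        conv_lhs => rw [P.as_sum]
        rw [map_sum]
        exact Finset.sum_congr rfl fun c _ => haev_mon c _
      have h0 : coeff (∑ r : Fin m, c₀ r • Er n m r) (aeval g P) = coeff c₀ P := by
        rw [hexp, coeff_sum]
        rw [Finset.sum_eq_single c₀]
        · rw [coeff_monomial, if_pos rfl]
        · intro c hc hne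
          rw [coeff_monomial, if_neg]
          exact fun heq => hne (hT_inj c c₀ heq)
        · intro h
          exact absurd hc₀ h
      rw [hP, coeff_zero] at h0
      exact (mem_support_iff.mp hc₀) h0.symm
    exact hinj
  -- kernel of the diagonal derivation
  have hkerδ : ∀ F : MvPolynomial (ZMod n) k,
      deltaD ε F = 0 ↔ F ∈ Algebra.adjoin k (Set.range g) := by
    intro F
    constructor
    · intro hF
      have hFsum : F = ∑ α ∈ F.support, monomial α (coeff α F) := F.as_sum
      rw [hFsum]
      apply Subalgebra.sum_mem
      intro α hα
      have hH : Hval ε α = 0 := by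
        have hc := coeff_deltaD (ε := ε) F α
        rw [hF, coeff_zero] at hc
        rcases mul_eq_zero.mp hc.symm with h | h
        · exact h
        · exact absurd h (mem_support_iff.mp hα)
      have hconst := const_of_Hval_zero hp hs hn hε α hH
      have hdec : α = ∑ r : Fin m, (α (((r : ℕ)) : ZMod n)) • Er n m r := by
        apply Finsupp.ext
        intro j
        rw [hTapply (fun r => α (((r : ℕ)) : ZMod n)) j]
        exact hconst j
      have hmono : monomial α (coeff α F) = C (coeff α F)
          * ∏ r : Fin m, g r ^ (α (((r : ℕ)) : ZMod n)) := by
        rw [show monomial α (coeff α F)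
            = monomial (∑ r : Fin m, (α (((r : ℕ)) : ZMod n)) • Er n m r) (coeff α F) from
          by rw [← hdec]]
        rw [monomial_sum_index]
        congr 1
        refine Finset.prod_congr rfl fun r _ => ?_
        rw [hg]
        simp only []
        rw [monomial_pow, one_pow]
      rw [hmono]
      apply mul_mem
      · rw [← algebraMap_eq]
        exact Subalgebra.algebraMap_mem _ _
      · exact prod_mem fun r _ =>
          pow_mem (Algebra.subset_adjoin (Set.mem_range_self r)) _
    · intro hF
      have hle : Algebra.adjoin k (Set.range g) ≤ constAlg (deltaD ε) := by
        apply Algebra.adjoin_le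
        rintro _ ⟨r, rfl⟩
        show deltaD ε (g r) = 0
        rw [hg]
        simp only []
        rw [deltaD_monomial]
        have hH : Hval ε (Er n m r) = 0 := by
          apply Hval_zero_of_const hp hs hn hε
          intro j
          rw [← hm, Er_apply, Er_apply]
          have hv : ZMod.val (((ZMod.val j % m : ℕ)) : ZMod n)
              = ZMod.val j % m := ZMod.val_cast_of_lt (lt_trans (Nat.mod_lt _ hm0) hmn)
          rw [hv, Nat.mod_mod_of_dvd _ dvd_rfl]
        rw [hH, zero_smul]
      exact hle hF
  -- transfer through the automorphism
  set φ := phiE (n := n) hε with hφ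
  refine ⟨fun r => φ (g r), ?_, ?_⟩
  · exact hAI.map' (f := φ.toAlgHom) φ.injective
  · ext F
    simp only [Set.mem_setOf_eq, SetLike.mem_coe]
    have hcomm : ∀ G, d (φ G) = φ (deltaD ε G) := fun G => d_phi_comm hd hε G
    have hFeq : φ (φ.symm F) = F := φ.apply_symm_apply F
    have hrange : Set.range (fun r => φ (g r)) = φ.toAlgHom '' Set.range g := by
      rw [← Set.range_comp]
      rfl
    constructor
    · intro hdF
      have h1 : φ (deltaD ε (φ.symm F)) = 0 := by rw [← hcomm, hFeq, hdF]
      have h2 : deltaD ε (φ.symm F) = 0 := by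
        apply φ.injective
        rw [h1, map_zero]
      have h4 : F ∈ (Algebra.adjoin k (Set.range g)).map φ.toAlgHom :=
        ⟨φ.symm F, (hkerδ _).mp h2, hFeq⟩
      rw [AlgHom.map_adjoin] at h4
      rw [hrange]
      exact h4
    · intro hF
      rw [hrange, ← AlgHom.map_adjoin] at hF
      obtain ⟨G, hG, hGF⟩ := hF
      have h2 : deltaD ε G = 0 := (hkerδ G).mpr hG
      rw [← hGF]
      show d (φ G) = 0
      rw [hcomm, h2, map_zero]

end PartC


/-- Let `n = p^s` with `p` prime and `s ≥ 1`. Then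
`ν(n) = ξ(n) = p^{s-1}`, and the ring of constants `k[X]^d` of the cyclotomic derivation
is a polynomial ring over `k` in `p^{s-1}` variables. -/
theorem stmt_14 {k : Type*} [Field k] [CharZero k] (n : ℕ) (hn : 3 ≤ n)
    (p s : ℕ) (hp : p.Prime) (hs : 1 ≤ s) (hnps : n = p ^ s)
    (ε : k) (hε : IsPrimitiveRoot ε n)
    (d : Derivation k (MvPolynomial (ZMod n) k) (MvPolynomial (ZMod n) k))
    (hd : ∀ j : ZMod n, d (X j) = X (j + 1)) :
    (cycMinimal n ε).ncard = p ^ (s - 1) ∧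
    (∑ q ∈ n.primeFactors, n / q) = p ^ (s - 1) ∧
    ∃ f : Fin (p ^ (s - 1)) → MvPolynomial (ZMod n) k,
      AlgebraicIndependent k f ∧
      {F : MvPolynomial (ZMod n) k | d F = 0} = ↑(Algebra.adjoin k (Set.range f)) := by
  haveI : NeZero n := ⟨by omega⟩
  refine ⟨cycMinimal_ncard hp hs hnps hε, ?_, partC hp hs hnps hε d hd⟩
  rw [hnps, Nat.primeFactors_prime_pow (by omega) hp, Finset.sum_singleton,
    n_eq_mp hs, Nat.mul_div_cancel _ hp.pos]
end

section
/- Let n = p^i q^j, where p ≠ q are primes and i, j ≥ 1. Then ν(n) = ξ(n) = p^{i−1} q^{j−1} (p + q): the monoid M_n has exactly p^{i−1} q^{j−1}(p+q) minimal elements. -/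
open Polynomial

section Aux

/-- A rotated `cycle`: indicator of `{i : i ≡ s mod m}` in `Fin n`. -/
def cyc (n m s : ℕ) : Fin n → ℕ := fun i => if (i : ℕ) % m = s then 1 else 0

lemma dvd_core (n m1 m2 : ℕ) (hn : 0 < n) (hm1 : 0 < m1) (hm2 : 0 < m2)
    (hd : ∀ d, d ∣ n → d ≠ n → d ∣ m1 ∨ d ∣ m2) :
    (X^n - 1 : ℚ[X]) ∣ (X^m1 - 1) * (X^m2 - 1) * cyclotomic n ℚ := by
  rw [← prod_cyclotomic_eq_X_pow_sub_one hn ℚ, ← prod_cyclotomic_eq_X_pow_sub_one hm1 ℚ,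
    ← prod_cyclotomic_eq_X_pow_sub_one hm2 ℚ]
  have hmem : n ∈ n.divisors := Nat.mem_divisors_self n hn.ne'
  rw [← Finset.mul_prod_erase _ _ hmem]
  have hsub : n.divisors.erase n ⊆ m1.divisors ∪ m2.divisors := by
    intro d hdm
    rcases Finset.mem_erase.mp hdm with ⟨hne, hdvd⟩
    rcases Nat.mem_divisors.mp hdvd with ⟨hdn, _⟩
    rcases hd d hdn hne with h | h
    · exact Finset.mem_union_left _ (Nat.mem_divisors.mpr ⟨h, hm1.ne'⟩)
    · exact Finset.mem_union_right _ (Nat.mem_divisors.mpr ⟨h, hm2.ne'⟩)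
  have h1 : ∏ d ∈ n.divisors.erase n, cyclotomic d ℚ ∣
      ∏ d ∈ m1.divisors ∪ m2.divisors, cyclotomic d ℚ :=
    Finset.prod_dvd_prod_of_subset _ _ _ hsub
  have h2 : ∏ d ∈ m1.divisors ∪ m2.divisors, cyclotomic d ℚ ∣
      (∏ d ∈ m1.divisors, cyclotomic d ℚ) * ∏ d ∈ m2.divisors, cyclotomic d ℚ := by
    rw [← Finset.union_sdiff_self_eq_union, Finset.prod_union Finset.sdiff_disjoint.symm]
    exact mul_dvd_mul_left _ (Finset.prod_dvd_prod_of_subset _ _ _ (Finset.sdiff_subset))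
  calc cyclotomic n ℚ * ∏ d ∈ n.divisors.erase n, cyclotomic d ℚ
      ∣ cyclotomic n ℚ *
        ((∏ d ∈ m1.divisors, cyclotomic d ℚ) * ∏ d ∈ m2.divisors, cyclotomic d ℚ) :=
        mul_dvd_mul_left _ (h1.trans h2)
    _ = (∏ d ∈ m1.divisors, cyclotomic d ℚ) * (∏ d ∈ m2.divisors, cyclotomic d ℚ) *
        cyclotomic n ℚ := by ring

lemma proper_div (p q A B n m1 m2 : ℕ) (hp : p.Prime) (hq : q.Prime)
    (hnpq : n = p ^ A * q ^ B) (h1 : p * m1 = n) (h2 : q * m2 = n)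
    (d : ℕ) (hdn : d ∣ n) (hne : d ≠ n) : d ∣ m1 ∨ d ∣ m2 := by
  obtain ⟨e, he⟩ := hdn
  have he1 : e ≠ 1 := by rintro rfl; simp at he; exact hne he.symm
  have hrp : e.minFac.Prime := Nat.minFac_prime he1
  have hre : e.minFac ∣ e := Nat.minFac_dvd e
  have hrn : e.minFac ∣ n := he ▸ hre.mul_left d
  have hpq : e.minFac = p ∨ e.minFac = q := by
    rw [hnpq] at hrn
    rcases hrp.dvd_mul.mp hrn with h | h
    · exact Or.inl ((Nat.prime_dvd_prime_iff_eq hrp hp).mp (hrp.dvd_of_dvd_pow h))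
    · exact Or.inr ((Nat.prime_dvd_prime_iff_eq hrp hq).mp (hrp.dvd_of_dvd_pow h))
  obtain ⟨e', he'⟩ := hre
  rcases hpq with hcase | hcase
  · left
    refine ⟨e', Nat.eq_of_mul_eq_mul_left hp.pos ?_⟩
    rw [h1, he, he', hcase]; ring
  · right
    refine ⟨e', Nat.eq_of_mul_eq_mul_left hq.pos ?_⟩
    rw [h2, he, he', hcase]; ring

noncomputable def rho (n : ℕ) : ℚ[X] →+* AddMonoidAlgebra ℚ (ZMod n) :=
  (AddMonoidAlgebra.mapDomainRingHom ℚ (Nat.castRingHom (ZMod n)).toAddMonoidHom).comp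
    (Polynomial.toFinsuppIso ℚ).toRingHom

lemma rho_CX (n : ℕ) (a : ℚ) (j : ℕ) :
    rho n (C a * X^j) = AddMonoidAlgebra.single (j : ZMod n) a := by
  simp [rho, Polynomial.toFinsuppIso, C_mul_X_pow_eq_monomial, toFinsupp_monomial,
    AddMonoidAlgebra.mapDomain_single]

lemma rho_X (n : ℕ) (j : ℕ) : rho n (X^j) = AddMonoidAlgebra.single (j : ZMod n) (1:ℚ) := by
  simpa using rho_CX n 1 j

lemma parallelogram {k : Type*} [Field k] [CharZero k] {n : ℕ} [NeZero n] {ε : k}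
    (hε : IsPrimitiveRoot ε n) {m1 m2 : ℕ}
    (hdvd : (X^n - 1 : ℚ[X]) ∣ (X^m1 - 1) * (X^m2 - 1) * cyclotomic n ℚ)
    (c : ZMod n → ℚ) (hc : ∑ r : ZMod n, (c r : k) * ε ^ r.val = 0)
    (x : ZMod n) (s t : ℕ) :
    c (x + ((s*m1 : ℕ) : ZMod n) + ((t*m2 : ℕ) : ZMod n)) + c x
      = c (x + ((s*m1 : ℕ) : ZMod n)) + c (x + ((t*m2 : ℕ) : ZMod n)) := by
  have hn : 0 < n := Nat.pos_of_ne_zero (NeZero.ne n)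
  set f : ℚ[X] := ∑ r : ZMod n, C (c r) * X ^ r.val with hf
  have haev : aeval ε f = 0 := by
    rw [hf, map_sum]
    have : ∀ r : ZMod n, aeval ε (C (c r) * X ^ r.val) = (c r : k) * ε ^ r.val := fun r => by
      simp [eq_ratCast (algebraMap ℚ k)]
    rw [Finset.sum_congr rfl fun r _ => this r, hc]
  have hΦ : cyclotomic n ℚ ∣ f := by
    rw [cyclotomic_eq_minpoly_rat hε hn]
    exact minpoly.dvd ℚ ε haev
  have hXs : (X^m1 - 1 : ℚ[X]) ∣ X^(s*m1) - 1 := by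
    simpa [← pow_mul, mul_comm] using sub_dvd_pow_sub_pow ((X:ℚ[X])^m1) 1 s
  have hXt : (X^m2 - 1 : ℚ[X]) ∣ X^(t*m2) - 1 := by
    simpa [← pow_mul, mul_comm] using sub_dvd_pow_sub_pow ((X:ℚ[X])^m2) 1 t
  obtain ⟨w, hw⟩ : (X^n - 1 : ℚ[X]) ∣ (X^(s*m1) - 1) * (X^(t*m2) - 1) * f :=
    dvd_trans hdvd (mul_dvd_mul (mul_dvd_mul hXs hXt) hΦ)
  set D1 : ZMod n := ((s*m1 : ℕ) : ZMod n) with hD1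
  set D2 : ZMod n := ((t*m2 : ℕ) : ZMod n) with hD2
  set F : AddMonoidAlgebra ℚ (ZMod n) := rho n f with hF
  have hz : (AddMonoidAlgebra.single D1 (1:ℚ) - 1) * (AddMonoidAlgebra.single D2 (1:ℚ) - 1) * F
      = 0 := by
    have h := congrArg (rho n) hw
    rw [map_mul, map_mul, map_mul, map_sub, map_sub, map_sub, map_one, rho_X, rho_X, rho_X,
      ZMod.natCast_self, ← AddMonoidAlgebra.one_def] at h
    rw [← hD1, ← hD2, ← hF] at h
    rw [h]
    ring
  have hFa : ∀ y : ZMod n, F.coeff y = c y := by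
    intro y
    rw [hF, hf, map_sum, AddMonoidAlgebra.coeff_sum, Finsupp.finset_sum_apply]
    have : ∀ r : ZMod n, (rho n (C (c r) * X ^ r.val)).coeff y = if r = y then c r else 0 := fun r => by
      rw [rho_CX, ZMod.natCast_rightInverse r]
      exact AddMonoidAlgebra.coeff_single_apply
    rw [Finset.sum_congr rfl fun r _ => this r]
    simp
  have hexp : AddMonoidAlgebra.single D1 (1:ℚ) * (AddMonoidAlgebra.single D2 (1:ℚ) * F) + F
      = AddMonoidAlgebra.single D1 (1:ℚ) * F + AddMonoidAlgebra.single D2 (1:ℚ) * F := by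
    linear_combination hz
  have addev : ∀ (G H : AddMonoidAlgebra ℚ (ZMod n)) (y : ZMod n), (G + H).coeff y = G.coeff y + H.coeff y :=
    fun G H y => Finsupp.add_apply G.coeff H.coeff y
  have ev : ∀ (D : ZMod n) (G : AddMonoidAlgebra ℚ (ZMod n)) (y : ZMod n),
      (AddMonoidAlgebra.single D (1:ℚ) * G).coeff y = G.coeff (-D + y) := fun D G y => by
    rw [AddMonoidAlgebra.coeff_single_mul_apply, one_mul]
  have happ := congrArg (fun g : AddMonoidAlgebra ℚ (ZMod n) => g.coeff (x + D1 + D2)) hexp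
  beta_reduce at happ
  rw [addev, addev, ev, ev, ev, ev] at happ
  have e1 : -D2 + (-D1 + (x + D1 + D2)) = x := by abel
  have e2 : -D1 + (x + D1 + D2) = x + D2 := by abel
  have e3 : -D2 + (x + D1 + D2) = x + D1 := by abel
  rw [e1, e2, e3, hFa, hFa, hFa, hFa] at happ
  linarith

lemma cyc_mem {k : Type*} [Field k] {n : ℕ} {ε : k} (hε : IsPrimitiveRoot ε n)
    (m r s : ℕ) (hmr : m * r = n) (hm : 0 < m) (hmn : m < n) (hs : s < m) :
    cyc n m s ∈ cycMonoid n ε := by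
  have hn : 0 < n := lt_trans hm hmn
  show ∑ i : Fin n, ((cyc n m s i : ℕ) : k) * ε ^ (i : ℕ) = 0
  have step1 : ∀ i : Fin n, ((cyc n m s i : ℕ) : k) * ε ^ (i : ℕ)
      = if (i : ℕ) % m = s then ε ^ (i : ℕ) else 0 := by
    intro i
    unfold cyc
    split_ifs <;> simp
  rw [Finset.sum_congr rfl fun i _ => step1 i, ← Finset.sum_filter]
  have hbound : ∀ t : Fin r, s + (t : ℕ) * m < n := by
    intro t
    have h1 : s + (t : ℕ) * m < ((t : ℕ) + 1) * m := by
      rw [add_mul, one_mul]; omega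
    have h2 : ((t : ℕ) + 1) * m ≤ r * m := Nat.mul_le_mul_right m t.isLt
    rw [mul_comm] at hmr
    omega
  have hset : Finset.univ.filter (fun i : Fin n => (i : ℕ) % m = s)
      = Finset.image (fun t : Fin r => (⟨s + (t : ℕ) * m, hbound t⟩ : Fin n)) Finset.univ := by
    ext i
    simp only [Finset.mem_filter, Finset.mem_univ, true_and, Finset.mem_image]
    constructor
    · intro h
      have hi : (i : ℕ) / m < r := by
        rw [Nat.div_lt_iff_lt_mul hm, mul_comm r m, hmr]
        exact i.isLt
      refine ⟨⟨(i : ℕ) / m, hi⟩, ?_⟩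
      apply Fin.ext
      simp only []
      have := Nat.mod_add_div' (i : ℕ) m
      omega
    · rintro ⟨t, rfl⟩
      simp only []
      rw [Nat.add_mul_mod_self_right, Nat.mod_eq_of_lt hs]
  rw [hset, Finset.sum_image (by
    intro t1 _ t2 _ h
    have := Fin.mk.injEq _ (hbound t1) _ (hbound t2) ▸ congrArg Fin.val h
    apply Fin.ext
    have h' : s + (t1 : ℕ) * m = s + (t2 : ℕ) * m := by
      simpa using congrArg Fin.val h
    exact Nat.eq_of_mul_eq_mul_right hm (by omega))]
  have hterm : ∀ t : Fin r, ε ^ ((⟨s + (t : ℕ) * m, hbound t⟩ : Fin n) : ℕ)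
      = ε ^ s * ((ε ^ m) ^ (t : ℕ)) := by
    intro t
    show ε ^ (s + (t : ℕ) * m) = _
    rw [pow_add, mul_comm (t : ℕ) m, pow_mul]
  rw [Finset.sum_congr rfl fun t _ => hterm t, ← Finset.mul_sum]
  have hne1 : ε ^ m ≠ 1 := hε.pow_ne_one_of_pos_of_lt hm.ne' hmn
  have hpow : (ε ^ m) ^ r = 1 := by
    rw [← pow_mul, hmr]
    exact hε.pow_eq_one
  have : ∑ t : Fin r, (ε ^ m) ^ (t : ℕ) = 0 := by
    rw [Fin.sum_univ_eq_sum_range, geom_sum_eq hne1, hpow, sub_self, zero_div]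
  rw [this, mul_zero]

lemma exists_cyc_le {k : Type*} [Field k] [CharZero k] {n : ℕ} [NeZero n] {ε : k}
    (hε : IsPrimitiveRoot ε n) {m1 m2 p q : ℕ}
    (h1 : m1 * p = n) (h2 : m2 * q = n) (hm1 : 0 < m1) (hm2 : 0 < m2)
    (hdvd : (X^n - 1 : ℚ[X]) ∣ (X^m1 - 1) * (X^m2 - 1) * cyclotomic n ℚ)
    (α : Fin n → ℕ) (hα : α ∈ cycMonoid n ε) (h0 : α ≠ 0) :
    (∃ s < m1, ∀ i, cyc n m1 s i ≤ α i) ∨ (∃ s < m2, ∀ i, cyc n m2 s i ≤ α i) := by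
  classical
  set c : ZMod n → ℚ := fun r => (α ⟨r.val, ZMod.val_lt r⟩ : ℚ) with hcdef
  have hcv : ∀ i : Fin n, c ((i : ℕ) : ZMod n) = (α i : ℚ) := by
    intro i
    have harg : (⟨(((i : ℕ) : ZMod n)).val, ZMod.val_lt _⟩ : Fin n) = i :=
      Fin.ext (by simp [ZMod.val_natCast, Nat.mod_eq_of_lt i.isLt])
    show (α _ : ℚ) = (α i : ℚ)
    rw [harg]
  have hc : ∑ r : ZMod n, (c r : k) * ε ^ r.val = 0 := by
    have hinj : Function.Injective (fun r : ZMod n => (⟨r.val, ZMod.val_lt r⟩ : Fin n)) :=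
      fun r r' h => ZMod.val_injective n (by simpa using congrArg Fin.val h)
    have hbij := (Fintype.bijective_iff_injective_and_card
      (fun r : ZMod n => (⟨r.val, ZMod.val_lt r⟩ : Fin n))).mpr ⟨hinj, by simp [ZMod.card]⟩
    have := Fintype.sum_bijective _ hbij
      (fun r : ZMod n => (c r : k) * ε ^ r.val)
      (fun i : Fin n => (α i : k) * ε ^ (i : ℕ))
      (fun r => by simp [hcdef])
    exact this.trans hα
  have cnn : ∀ r : ZMod n, 0 ≤ c r := fun r => Nat.cast_nonneg _
  have cint : ∀ r : ZMod n, 0 < c r → 1 ≤ c r := by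
    intro r h
    have : (0 : ℚ) < (α ⟨r.val, ZMod.val_lt r⟩ : ℚ) := h
    have : 0 < α ⟨r.val, ZMod.val_lt r⟩ := by exact_mod_cast this
    show (1 : ℚ) ≤ (α ⟨r.val, ZMod.val_lt r⟩ : ℚ)
    exact_mod_cast this
  obtain ⟨i0, hi0⟩ := Function.ne_iff.mp h0
  set x0 : ZMod n := ((i0 : ℕ) : ZMod n) with hx0def
  have hx0 : 1 ≤ c x0 := by
    rw [hx0def, hcv]
    exact_mod_cast Nat.one_le_iff_ne_zero.mpr hi0
  have par := parallelogram hε hdvd c hc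
  have dom : ∀ m r : ℕ, m * r = n → 0 < m →
      (∀ t : ℕ, 1 ≤ c (x0 + ((t * m : ℕ) : ZMod n))) →
      ∃ s < m, ∀ i : Fin n, cyc n m s i ≤ α i := by
    intro m r hmr hm hall
    refine ⟨(i0 : ℕ) % m, Nat.mod_lt _ hm, ?_⟩
    intro i
    unfold cyc
    split_ifs with hmod
    · -- show 1 ≤ α i
      have hrm : r * m = n := by rw [mul_comm]; exact hmr
      set u := (i : ℕ) / m with hu
      set v := (i0 : ℕ) / m with hv
      have hvr : v ≤ r := by
        have : (i0 : ℕ) < r * m := hrm ▸ i0.isLt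
        have := Nat.div_lt_iff_lt_mul hm |>.mpr this
        omega
      have key : (i0 : ℕ) + (u + (r - v)) * m = (i : ℕ) + n := by
        have e1 : (i : ℕ) % m + u * m = (i : ℕ) := Nat.mod_add_div' _ _
        have e2 : (i0 : ℕ) % m + v * m = (i0 : ℕ) := Nat.mod_add_div' _ _
        have e3 : (u + (r - v)) * m = u * m + (r - v) * m := Nat.add_mul _ _ _
        have e4 : (r - v) * m = r * m - v * m := Nat.sub_mul _ _ _
        have e5 : v * m ≤ r * m := Nat.mul_le_mul_right m hvr
        omega
      have hz : ((i : ℕ) : ZMod n) = x0 + (((u + (r - v)) * m : ℕ) : ZMod n) := by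
        rw [hx0def, ← Nat.cast_add, key, Nat.cast_add, ZMod.natCast_self, add_zero]
      have := hall (u + (r - v))
      rw [← hz, hcv] at this
      exact_mod_cast this
    · exact Nat.zero_le _
  by_cases hcase : ∀ t : ℕ, 1 ≤ c (x0 + ((t * m2 : ℕ) : ZMod n))
  · exact Or.inr (dom m2 q h2 hm2 hcase)
  · push_neg at hcase
    obtain ⟨t0, ht0⟩ := hcase
    have ht0' : c (x0 + ((t0 * m2 : ℕ) : ZMod n)) = 0 := by
      rcases eq_or_lt_of_le (cnn (x0 + ((t0 * m2 : ℕ) : ZMod n))) with h | h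
      · exact h.symm
      · exact absurd (cint _ h) (by linarith)
    refine Or.inl (dom m1 p h1 hm1 ?_)
    intro s
    have hpar := par x0 s t0
    have hnn := cnn (x0 + ((s * m1 : ℕ) : ZMod n) + ((t0 * m2 : ℕ) : ZMod n))
    have : 0 < c (x0 + ((s * m1 : ℕ) : ZMod n)) := by linarith
    exact cint _ this

end Aux

/-- Let `n = p^i q^j` with `p ≠ q` primes and `i, j ≥ 1`. Then
`ν(n) = ξ(n) = p^{i-1} q^{j-1} (p + q)`: the monoid `M_n` has exactly
`p^{i-1} q^{j-1} (p + q)` minimal elements. -/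
theorem stmt_16 {k : Type*} [Field k] [CharZero k] (n : ℕ) (hn : 3 ≤ n)
    (p q i j : ℕ) (hp : p.Prime) (hq : q.Prime) (hpq : p ≠ q)
    (hi : 1 ≤ i) (hj : 1 ≤ j) (hnpq : n = p ^ i * q ^ j)
    (ε : k) (hε : IsPrimitiveRoot ε n) :
    (cycMinimal n ε).ncard = p ^ (i - 1) * q ^ (j - 1) * (p + q) ∧
    (∑ r ∈ n.primeFactors, n / r) = p ^ (i - 1) * q ^ (j - 1) * (p + q) := by
  classical
  have hn0 : 0 < n := by omega
  haveI : NeZero n := ⟨by omega⟩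
  set m1 := p ^ (i - 1) * q ^ j with hm1def
  set m2 := p ^ i * q ^ (j - 1) with hm2def
  have hpi : p ^ i = p * p ^ (i - 1) := by
    conv_lhs => rw [show i = (i - 1) + 1 by omega]
    rw [pow_succ]; ring
  have hqj : q ^ j = q * q ^ (j - 1) := by
    conv_lhs => rw [show j = (j - 1) + 1 by omega]
    rw [pow_succ]; ring
  have hpm1 : p * m1 = n := by rw [hnpq, hm1def, hpi]; ring
  have hqm2 : q * m2 = n := by rw [hnpq, hm2def, hqj]; ring
  have h1' : m1 * p = n := by rw [mul_comm]; exact hpm1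
  have h2' : m2 * q = n := by rw [mul_comm]; exact hqm2
  have hm1pos : 0 < m1 := Nat.mul_pos (pow_pos hp.pos _) (pow_pos hq.pos _)
  have hm2pos : 0 < m2 := Nat.mul_pos (pow_pos hp.pos _) (pow_pos hq.pos _)
  have hm1n : m1 < n := by
    have hx : m1 * 2 ≤ m1 * p := Nat.mul_le_mul_left m1 hp.two_le
    omega
  have hm2n : m2 < n := by
    have hx : m2 * 2 ≤ m2 * q := Nat.mul_le_mul_left m2 hq.two_le
    omega
  have hm1m2 : ¬ m1 ∣ m2 := by
    intro hdvd
    have hx : q ^ j ∣ m2 := dvd_trans (dvd_mul_left _ _) hdvd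
    rw [hm2def, hqj, mul_comm (p ^ i) (q ^ (j - 1)), mul_comm q (q ^ (j - 1))] at hx
    have hqd : q ∣ p ^ i := (mul_dvd_mul_iff_left (pow_pos hq.pos (j - 1)).ne').mp hx
    exact hpq ((Nat.prime_dvd_prime_iff_eq hq hp).mp (hq.dvd_of_dvd_pow hqd)).symm
  have hm2m1 : ¬ m2 ∣ m1 := by
    intro hdvd
    have hx : p ^ i ∣ m1 := dvd_trans (dvd_mul_right _ _) hdvd
    rw [hm1def, hpi, mul_comm p (p ^ (i - 1))] at hx
    have hpd : p ∣ q ^ j := (mul_dvd_mul_iff_left (pow_pos hp.pos (i - 1)).ne').mp hx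
    exact hpq ((Nat.prime_dvd_prime_iff_eq hp hq).mp (hp.dvd_of_dvd_pow hpd))
  have hdvdpoly : (X^n - 1 : ℚ[X]) ∣ (X^m1 - 1) * (X^m2 - 1) * cyclotomic n ℚ :=
    dvd_core n m1 m2 hn0 hm1pos hm2pos (proper_div p q i j n m1 m2 hp hq hnpq hpm1 hqm2)
  have hmem1 : ∀ s, s < m1 → cyc n m1 s ∈ cycMonoid n ε := fun s hs =>
    cyc_mem hε m1 p s h1' hm1pos hm1n hs
  have hmem2 : ∀ s, s < m2 → cyc n m2 s ∈ cycMonoid n ε := fun s hs =>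
    cyc_mem hε m2 q s h2' hm2pos hm2n hs
  have hne0 : ∀ (m s : ℕ), s < m → s < n → cyc n m s ≠ 0 := by
    intro m s hs hsn h
    have h2 := congrFun h ⟨s, hsn⟩
    unfold cyc at h2
    have hcond : ((⟨s, hsn⟩ : Fin n) : ℕ) % m = s := Nat.mod_eq_of_lt hs
    rw [if_pos hcond] at h2
    simp at h2
  -- the comparison lemma for cycles
  have hle_lemma : ∀ (m r m' r' s s' : ℕ), m * r = n → m' * r' = n → 2 ≤ r' → 0 < m →
      s < m → s' < m' → (∀ i2 : Fin n, cyc n m' s' i2 ≤ cyc n m s i2) →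
      m ∣ m' ∧ s' % m = s := by
    intro m r m' r' s s' hmr hm'r' hr' hm hs hs' hle
    have hm'pos : 0 < m' := by
      rcases Nat.eq_zero_or_pos m' with h | h
      · subst h; simp at hm'r'; omega
      · exact h
    have hx : m' * 2 ≤ m' * r' := Nat.mul_le_mul_left m' hr'
    have hs'n : s' < n := by omega
    have hs'mn : s' + m' < n := by omega
    have c1 : s' % m = s := by
      have h := hle ⟨s', hs'n⟩
      unfold cyc at h
      have hcond : ((⟨s', hs'n⟩ : Fin n) : ℕ) % m' = s' := Nat.mod_eq_of_lt hs'
      rw [if_pos hcond] at h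
      by_contra hne
      rw [if_neg hne] at h
      omega
    have c2 : (s' + m') % m = s := by
      have h := hle ⟨s' + m', hs'mn⟩
      unfold cyc at h
      have hcond : ((⟨s' + m', hs'mn⟩ : Fin n) : ℕ) % m' = s' := by
        show (s' + m') % m' = s'
        rw [Nat.add_mod_right]
        exact Nat.mod_eq_of_lt hs'
      rw [if_pos hcond] at h
      by_contra hne
      rw [if_neg hne] at h
      omega
    refine ⟨?_, c1⟩
    have hmodeq : s' ≡ s' + m' [MOD m] := by
      unfold Nat.ModEq
      rw [c1, c2]
    have := (Nat.modEq_iff_dvd' (Nat.le_add_right s' m')).mp hmodeq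
    simpa using this
  -- subtraction stays in the monoid
  have hsubmem : ∀ (α C : Fin n → ℕ), α ∈ cycMonoid n ε → C ∈ cycMonoid n ε →
      (∀ i2, C i2 ≤ α i2) → (α - C) ∈ cycMonoid n ε := by
    intro α C hα hC hle
    show ∑ i2 : Fin n, (((α - C) i2 : ℕ) : k) * ε ^ (i2 : ℕ) = 0
    have hstep : ∀ i2 : Fin n, (((α - C) i2 : ℕ) : k) * ε ^ (i2 : ℕ)
        = (α i2 : k) * ε ^ (i2 : ℕ) - (C i2 : k) * ε ^ (i2 : ℕ) := by
      intro i2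
      have : ((α - C) i2 : ℕ) = α i2 - C i2 := rfl
      rw [this, Nat.cast_sub (hle i2), sub_mul]
    rw [Finset.sum_congr rfl fun i2 _ => hstep i2, Finset.sum_sub_distrib, hα, hC, sub_zero]
  -- decomposition of a dominated element
  have hdecomp : ∀ (α C : Fin n → ℕ), (∀ i2, C i2 ≤ α i2) → α = C + (α - C) := by
    intro α C hle
    funext i2
    have := hle i2
    show α i2 = C i2 + (α i2 - C i2)
    omega
  -- cycles are minimal
  have hmin1 : ∀ s, s < m1 → cyc n m1 s ∈ cycMinimal n ε := by
    intro s hs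
    refine ⟨hmem1 s hs, hne0 m1 s hs (by omega), ?_⟩
    rintro ⟨β, γ, hβ, hγ, hβ0, hγ0, hsum⟩
    have hβle : ∀ i2, β i2 ≤ cyc n m1 s i2 := by
      intro i2
      have := congrFun hsum i2
      simp only [Pi.add_apply] at this
      omega
    rcases exists_cyc_le hε h1' h2' hm1pos hm2pos hdvdpoly β hβ hβ0 with
      ⟨s', hs', hle⟩ | ⟨s', hs', hle⟩
    · have hle2 : ∀ i2, cyc n m1 s' i2 ≤ cyc n m1 s i2 := fun i2 => (hle i2).trans (hβle i2)
      have := hle_lemma m1 p m1 p s s' h1' h1' hp.two_le hm1pos hs hs' hle2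
      have hss : s' = s := by rw [← this.2, Nat.mod_eq_of_lt hs']
      subst hss
      apply hγ0
      funext i2
      have hq1 := congrFun hsum i2
      simp only [Pi.add_apply] at hq1
      have hq2 := hle i2
      show γ i2 = 0
      omega
    · have hle2 : ∀ i2, cyc n m2 s' i2 ≤ cyc n m1 s i2 := fun i2 => (hle i2).trans (hβle i2)
      exact hm1m2 (hle_lemma m1 p m2 q s s' h1' h2' hq.two_le hm1pos hs hs' hle2).1
  have hmin2 : ∀ s, s < m2 → cyc n m2 s ∈ cycMinimal n ε := by
    intro s hs
    refine ⟨hmem2 s hs, hne0 m2 s hs (by omega), ?_⟩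
    rintro ⟨β, γ, hβ, hγ, hβ0, hγ0, hsum⟩
    have hβle : ∀ i2, β i2 ≤ cyc n m2 s i2 := by
      intro i2
      have := congrFun hsum i2
      simp only [Pi.add_apply] at this
      omega
    rcases exists_cyc_le hε h1' h2' hm1pos hm2pos hdvdpoly β hβ hβ0 with
      ⟨s', hs', hle⟩ | ⟨s', hs', hle⟩
    · have hle2 : ∀ i2, cyc n m1 s' i2 ≤ cyc n m2 s i2 := fun i2 => (hle i2).trans (hβle i2)
      exact hm2m1 (hle_lemma m2 q m1 p s s' h2' h1' hp.two_le hm2pos hs hs' hle2).1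
    · have hle2 : ∀ i2, cyc n m2 s' i2 ≤ cyc n m2 s i2 := fun i2 => (hle i2).trans (hβle i2)
      have := hle_lemma m2 q m2 q s s' h2' h2' hq.two_le hm2pos hs hs' hle2
      have hss : s' = s := by rw [← this.2, Nat.mod_eq_of_lt hs']
      subst hss
      apply hγ0
      funext i2
      have hq1 := congrFun hsum i2
      simp only [Pi.add_apply] at hq1
      have hq2 := hle i2
      show γ i2 = 0
      omega
  set S1 : Set (Fin n → ℕ) := Set.range (fun s : Fin m1 => cyc n m1 (s : ℕ)) with hS1
  set S2 : Set (Fin n → ℕ) := Set.range (fun s : Fin m2 => cyc n m2 (s : ℕ)) with hS2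
  have hset : cycMinimal n ε = S1 ∪ S2 := by
    ext α
    constructor
    · rintro ⟨hαm, hα0, hdec⟩
      have hfix : ∀ (m r : ℕ) (s : ℕ), m * r = n → s < m →
          cyc n m s ∈ cycMonoid n ε → cyc n m s ≠ 0 →
          (∀ i2, cyc n m s i2 ≤ α i2) → α = cyc n m s := by
        intro m r s hmr hs hCm hC0 hle
        by_contra hne
        apply hdec
        refine ⟨cyc n m s, α - cyc n m s, hCm, hsubmem α _ hαm hCm hle, hC0, ?_,
          hdecomp α _ hle⟩
        intro hzero
        apply hne
        have := hdecomp α (cyc n m s) hle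
        rw [hzero, add_zero] at this
        exact this.symm ▸ rfl
      rcases exists_cyc_le hε h1' h2' hm1pos hm2pos hdvdpoly α hαm hα0 with
        ⟨s, hs, hle⟩ | ⟨s, hs, hle⟩
      · left
        refine ⟨⟨s, hs⟩, ?_⟩
        exact (hfix m1 p s h1' hs (hmem1 s hs) (hne0 m1 s hs (by omega)) hle).symm
      · right
        refine ⟨⟨s, hs⟩, ?_⟩
        exact (hfix m2 q s h2' hs (hmem2 s hs) (hne0 m2 s hs (by omega)) hle).symm
    · rintro (⟨s, rfl⟩ | ⟨s, rfl⟩)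
      · exact hmin1 (s : ℕ) s.isLt
      · exact hmin2 (s : ℕ) s.isLt
  have hinj1 : Function.Injective (fun s : Fin m1 => cyc n m1 (s : ℕ)) := by
    intro s s' h
    have hle : ∀ i2 : Fin n, cyc n m1 (s' : ℕ) i2 ≤ cyc n m1 (s : ℕ) i2 :=
      fun i2 => (congrFun h i2).ge
    have := (hle_lemma m1 p m1 p (s : ℕ) (s' : ℕ) h1' h1' hp.two_le hm1pos s.isLt s'.isLt hle).2
    apply Fin.ext
    rw [← this, Nat.mod_eq_of_lt s'.isLt]
  have hinj2 : Function.Injective (fun s : Fin m2 => cyc n m2 (s : ℕ)) := by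
    intro s s' h
    have hle : ∀ i2 : Fin n, cyc n m2 (s' : ℕ) i2 ≤ cyc n m2 (s : ℕ) i2 :=
      fun i2 => (congrFun h i2).ge
    have := (hle_lemma m2 q m2 q (s : ℕ) (s' : ℕ) h2' h2' hq.two_le hm2pos s.isLt s'.isLt hle).2
    apply Fin.ext
    rw [← this, Nat.mod_eq_of_lt s'.isLt]
  have hdisj : Disjoint S1 S2 := by
    rw [Set.disjoint_left]
    rintro a ⟨s, rfl⟩ ⟨t, ht⟩
    have hle : ∀ i2 : Fin n, cyc n m2 (t : ℕ) i2 ≤ cyc n m1 (s : ℕ) i2 :=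
      fun i2 => (congrFun ht i2).le
    exact hm1m2 (hle_lemma m1 p m2 q (s : ℕ) (t : ℕ) h1' h2' hq.two_le hm1pos s.isLt t.isLt hle).1
  have hcard1 : S1.ncard = m1 := by
    rw [hS1, ← Set.image_univ, Set.ncard_image_of_injective _ hinj1, Set.ncard_univ,
      Nat.card_eq_fintype_card, Fintype.card_fin]
  have hcard2 : S2.ncard = m2 := by
    rw [hS2, ← Set.image_univ, Set.ncard_image_of_injective _ hinj2, Set.ncard_univ,
      Nat.card_eq_fintype_card, Fintype.card_fin]
  have hkey : (cycMinimal n ε).ncard = m1 + m2 := by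
    rw [hset, Set.ncard_union_eq hdisj (S1.toFinite) (S2.toFinite), hcard1, hcard2]
  have harith : m1 + m2 = p ^ (i - 1) * q ^ (j - 1) * (p + q) := by
    rw [hm1def, hm2def, hpi, hqj]; ring
  have hpf : n.primeFactors = {p, q} := by
    rw [hnpq, Nat.primeFactors_mul (pow_ne_zero i hp.pos.ne') (pow_ne_zero j hq.pos.ne'),
      Nat.primeFactors_pow _ (by omega : i ≠ 0), Nat.primeFactors_pow _ (by omega : j ≠ 0),
      Nat.Prime.primeFactors hp, Nat.Prime.primeFactors hq]
    rfl
  have hdiv1 : n / p = m1 := by rw [← hpm1]; exact Nat.mul_div_cancel_left _ hp.pos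
  have hdiv2 : n / q = m2 := by rw [← hqm2]; exact Nat.mul_div_cancel_left _ hq.pos
  constructor
  · rw [hkey, harith]
  · rw [hpf, Finset.sum_pair hpq, hdiv1, hdiv2, harith]
end

section
/- Let F ∈ k[Y] be a strict Darboux polynomial of Δ with F ∉ k, of degree r, and with cofactor Λ = λ_0 y_0 + ⋯ + λ_{n−1} y_{n−1} (λ_i ∈ k). Then every λ_i is an integer satisfying −r ≤ λ_i ≤ 0, and at least two of the λ_i are nonzero. -/
open MvPolynomial

lemma coeff_X_mul_pderiv' {k : Type*} [CommRing k] {σ : Type*} [DecidableEq σ]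
    (j : σ) (p : MvPolynomial σ k) (γ : σ →₀ ℕ) :
    coeff γ (X j * pderiv j p) = (γ j : k) * coeff γ p := by
  induction p using MvPolynomial.induction_on' with
  | add p q hp hq => rw [map_add, mul_add, coeff_add, hp, hq, coeff_add, mul_add]
  | monomial u a =>
    rw [pderiv_monomial, coeff_X_mul', coeff_monomial]
    by_cases hγ : j ∈ γ.support
    · rw [if_pos hγ, coeff_monomial]
      by_cases h : u = γ
      · subst h
        simp [mul_comm]
      · rw [if_neg h]
        by_cases h2 : u - Finsupp.single j 1 = γ - Finsupp.single j 1
        · rw [if_pos h2]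
          have hu : u j = 0 := by
            by_contra hu
            apply h
            ext t
            have := DFunLike.congr_fun h2 t
            simp only [Finsupp.tsub_apply, Finsupp.single_apply] at this
            have hγj : γ j ≠ 0 := Finsupp.mem_support_iff.mp hγ
            by_cases ht : t = j
            · subst ht
              simp at this
              omega
            · simpa [ne_comm.mp ht] using this
          rw [hu]
          simp
        · rw [if_neg h2, mul_zero]
    · rw [if_neg hγ]
      have : γ j = 0 := by simpa using hγ
      rw [this]
      simp


/-- Let `Δ` be the factorisable derivation of `k[y_0,…,y_{n-1}]` with
`Δ(y_j) = y_j(y_{j+1} - y_j)` (indices mod `n`). If `F ∉ k` is a strict Darboux polynomial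
of `Δ` (a nonzero homogeneous polynomial, divisible by none of the variables, with
`Δ(F) = Λ·F` for the linear cofactor `Λ = Σ λ_i y_i`), of degree `r`, then every `λ_i` is
an integer with `-r ≤ λ_i ≤ 0`, and at least two of the `λ_i` are nonzero. -/
theorem stmt_17 {k : Type*} [Field k] [CharZero k] (n : ℕ) (hn : 3 ≤ n) [NeZero n]
    (Δ : Derivation k (MvPolynomial (ZMod n) k) (MvPolynomial (ZMod n) k))
    (hΔ : ∀ j : ZMod n, Δ (X j) = X j * (X (j + 1) - X j))
    (F : MvPolynomial (ZMod n) k) (r : ℕ)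
    (hF0 : F ≠ 0) (hFhom : F.IsHomogeneous r)
    (hFk : F ∉ Set.range (C : k → MvPolynomial (ZMod n) k))
    (hstrict : ∀ j : ZMod n, ¬ X j ∣ F)
    (lam : ZMod n → k)
    (hDarboux : Δ F = (∑ i : ZMod n, C (lam i) * X i) * F) :
    (∀ i : ZMod n, ∃ m : ℤ, lam i = (m : k) ∧ -(r : ℤ) ≤ m ∧ m ≤ 0) ∧
    ∃ i j : ZMod n, i ≠ j ∧ lam i ≠ 0 ∧ lam j ≠ 0 := by
  classical
  -- basic ZMod facts
  have hcast : ∀ t : ℕ, 0 < t → t < n → ((t : ℕ) : ZMod n) ≠ 0 := by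
    intro t ht htn h
    rw [ZMod.natCast_eq_zero_iff] at h
    have := Nat.le_of_dvd ht h
    omega
  have h1ne : (1 : ZMod n) ≠ 0 := by
    have := hcast 1 (by omega) (by omega)
    simpa using this
  have hsub1 : ∀ i : ZMod n, i - 1 ≠ i := by
    intro i h
    rw [sub_eq_self] at h
    exact h1ne h
  -- degrees
  have hdeg : ∀ α ∈ F.support, Finsupp.degree α = r := by
    intro α hα
    by_contra h
    exact (mem_support_iff.mp hα) (hFhom.coeff_eq_zero h)
  -- divisibility helper
  have hdvd : ∀ s : ZMod n, (∀ β ∈ F.support, β s ≠ 0) → X s ∣ F := by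
    intro s hs
    have : (X s : MvPolynomial (ZMod n) k) ∣ ∑ v ∈ F.support, monomial v (coeff v F) :=
      Finset.dvd_sum fun v hv => X_dvd_monomial.mpr (Or.inr (hs v hv))
    rwa [support_sum_monomial_coeff] at this
  have hzero : ∀ s : ZMod n, ∃ β ∈ F.support, β s = 0 := by
    intro s
    by_contra h
    push_neg at h
    exact hstrict s (hdvd s h)
  -- the derivation formula
  have hΔF : Δ F = ∑ j : ZMod n, (X j * (X (j + 1) - X j)) * pderiv j F := by
    have hD : Δ = ∑ j : ZMod n, ((X j * (X (j + 1) - X j) : MvPolynomial (ZMod n) k) •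
        (pderiv j : Derivation k (MvPolynomial (ZMod n) k) (MvPolynomial (ZMod n) k))) := by
      apply MvPolynomial.derivation_ext
      intro i
      have hcoe : ⇑(∑ j : ZMod n, ((X j * (X (j + 1) - X j) : MvPolynomial (ZMod n) k) •
          (pderiv j : Derivation k (MvPolynomial (ZMod n) k) (MvPolynomial (ZMod n) k)))) =
          ∑ j : ZMod n, ⇑((X j * (X (j + 1) - X j) : MvPolynomial (ZMod n) k) •
          (pderiv j : Derivation k (MvPolynomial (ZMod n) k) (MvPolynomial (ZMod n) k))) :=
        map_sum Derivation.coeFnAddMonoidHom _ _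
      rw [hΔ i]
      show _ = (∑ j : ZMod n, ((X j * (X (j + 1) - X j) : MvPolynomial (ZMod n) k) •
          (pderiv j : Derivation k (MvPolynomial (ZMod n) k) (MvPolynomial (ZMod n) k)))) (X i)
      rw [hcoe, Finset.sum_apply, Finset.sum_eq_single i]
      · simp [Derivation.smul_apply, pderiv_X_self]
      · intro b _ hbi
        simp [Derivation.smul_apply, pderiv_X_of_ne (Ne.symm hbi)]
      · simp
    rw [hD]
    have hcoe : ⇑(∑ j : ZMod n, ((X j * (X (j + 1) - X j) : MvPolynomial (ZMod n) k) •
        (pderiv j : Derivation k (MvPolynomial (ZMod n) k) (MvPolynomial (ZMod n) k)))) =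
        ∑ j : ZMod n, ⇑((X j * (X (j + 1) - X j) : MvPolynomial (ZMod n) k) •
        (pderiv j : Derivation k (MvPolynomial (ZMod n) k) (MvPolynomial (ZMod n) k))) :=
      map_sum Derivation.coeFnAddMonoidHom _ _
    rw [hcoe, Finset.sum_apply]
    refine Finset.sum_congr rfl fun j _ => ?_
    simp [Derivation.smul_apply]
  -- the coefficient identity
  have hco : ∀ β : ZMod n →₀ ℕ,
      (∑ j : ZMod n, coeff β (X (j + 1) * (X j * pderiv j F)))
        - (∑ j : ZMod n, coeff β (X j * (X j * pderiv j F)))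
      = ∑ j : ZMod n, lam j * coeff β (X j * F) := by
    intro β
    have h1 := congrArg (coeff β) hDarboux
    rw [hΔF, coeff_sum, Finset.sum_mul, coeff_sum] at h1
    have hL : ∑ j : ZMod n, coeff β (X j * (X (j + 1) - X j) * pderiv j F)
        = (∑ j : ZMod n, coeff β (X (j + 1) * (X j * pderiv j F)))
          - (∑ j : ZMod n, coeff β (X j * (X j * pderiv j F))) := by
      rw [← Finset.sum_sub_distrib]
      refine Finset.sum_congr rfl fun j _ => ?_
      rw [← coeff_sub]
      congr 1
      ring
    have hR : ∑ j : ZMod n, coeff β (C (lam j) * X j * F)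
        = ∑ j : ZMod n, lam j * coeff β (X j * F) := by
      refine Finset.sum_congr rfl fun j _ => ?_
      rw [mul_assoc, coeff_C_mul]
    rw [hL, hR] at h1
    exact h1
  -- the key lemma
  have key : ∀ i : ZMod n, ∃ α ∈ F.support,
      lam i = (α (i - 1) : k) - (α i : k) ∧
      ∀ β ∈ F.support, (α (i - 1) : ℤ) - (α i : ℤ) ≤ (β (i - 1) : ℤ) - (β i : ℤ) := by
    intro i
    obtain ⟨α, hαs, hmin⟩ := Finset.exists_min_image F.support
      (fun β => (β (i - 1) : ℤ) - (β i : ℤ)) (support_nonempty.mpr hF0)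
    refine ⟨α, hαs, ?_, hmin⟩
    have hc : coeff α F ≠ 0 := mem_support_iff.mp hαs
    set β : ZMod n →₀ ℕ := α + Finsupp.single i 1 with hβdef
    have hβi : β i = α i + 1 := by simp [hβdef]
    have hβne : ∀ t, t ≠ i → β t = α t := by
      intro t ht
      simp [hβdef, Finsupp.single_apply, ne_comm.mp ht]
    have hαβ : β - Finsupp.single i 1 = α := add_tsub_cancel_right α _
    have hvan : ∀ s : ZMod n, s ≠ i → coeff (β - Finsupp.single s 1) F = 0 := by
      intro s hs
      set γ := β - Finsupp.single s 1 with hγdef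
      have hγi : γ i = α i + 1 := by
        rw [hγdef]
        rw [Finsupp.tsub_apply, Finsupp.single_apply, hβi, if_neg hs]
        omega
      have hγi1 : γ (i - 1) ≤ α (i - 1) := by
        rw [hγdef, Finsupp.tsub_apply, ← hβne (i - 1) (hsub1 i)]
        exact Nat.sub_le _ _
      by_contra hcc
      have hm := hmin _ (mem_support_iff.mpr hcc)
      omega
    have HS := hco β
    -- evaluate S1
    have hS1 : (∑ j : ZMod n, coeff β (X (j + 1) * (X j * pderiv j F)))
        = (α (i - 1) : k) * coeff α F := by
      rw [Finset.sum_eq_single_of_mem (i - 1) (Finset.mem_univ _)]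
      · rw [sub_add_cancel, coeff_X_mul',
          if_pos (Finsupp.mem_support_iff.mpr (by omega)), hαβ, coeff_X_mul_pderiv']
      · intro j _ hj
        rw [coeff_X_mul']
        split
        · rw [coeff_X_mul_pderiv', hvan (j + 1) (fun h => hj (by rw [← h]; ring)), mul_zero]
        · rfl
    have hS2 : (∑ j : ZMod n, coeff β (X j * (X j * pderiv j F)))
        = (α i : k) * coeff α F := by
      rw [Finset.sum_eq_single_of_mem i (Finset.mem_univ _)]
      · rw [coeff_X_mul', if_pos (Finsupp.mem_support_iff.mpr (by omega)), hαβ,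
          coeff_X_mul_pderiv']
      · intro j _ hj
        rw [coeff_X_mul']
        split
        · rw [coeff_X_mul_pderiv', hvan j hj, mul_zero]
        · rfl
    have hS3 : (∑ j : ZMod n, lam j * coeff β (X j * F)) = lam i * coeff α F := by
      rw [Finset.sum_eq_single_of_mem i (Finset.mem_univ _)]
      · rw [coeff_X_mul', if_pos (Finsupp.mem_support_iff.mpr (by omega)), hαβ]
      · intro j _ hj
        rw [coeff_X_mul']
        split
        · rw [hvan j hj, mul_zero]
        · rw [mul_zero]
    rw [hS1, hS2, hS3] at HS
    have : ((α (i - 1) : k) - (α i : k)) * coeff α F = lam i * coeff α F := by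
      rw [sub_mul]; exact HS
    exact (mul_right_cancel₀ hc this).symm
  constructor
  · -- part 1
    intro i
    obtain ⟨α, hαs, hlam, hmin⟩ := key i
    refine ⟨(α (i - 1) : ℤ) - (α i : ℤ), by rw [hlam]; push_cast; ring, ?_, ?_⟩
    · have h1 := hdeg α hαs
      have h2 : α i ≤ Finsupp.degree α := Finsupp.le_degree i α
      omega
    · by_contra h0
      push_neg at h0
      refine hstrict (i - 1) (hdvd (i - 1) ?_)
      intro β hβ
      have := hmin β hβ
      omega
  · -- part 2
    by_contra hcon
    push_neg at hcon
    have hone : ∃ j₀ : ZMod n, ∀ j, j ≠ j₀ → lam j = 0 := by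
      by_cases hall : ∀ j, lam j = 0
      · exact ⟨0, fun j _ => hall j⟩
      · push_neg at hall
        obtain ⟨j₀, hj₀⟩ := hall
        exact ⟨j₀, fun j hj => hcon j₀ j (fun h => hj h.symm) hj₀⟩
    obtain ⟨j₀, hj0⟩ := hone
    have hge : ∀ j : ZMod n, j ≠ j₀ → ∀ β ∈ F.support, (β j : ℤ) ≤ (β (j - 1) : ℤ) := by
      intro j hj β hβ
      obtain ⟨α, hαs, hlam, hmin⟩ := key j
      rw [hj0 j hj] at hlam
      have heq : (α (j - 1) : k) = (α j : k) := sub_eq_zero.mp hlam.symm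
      have hnat : α (j - 1) = α j := Nat.cast_injective.eq_iff.mp heq
      have := hmin β hβ
      omega
    obtain ⟨α₀, hα₀s, hα₀⟩ := hzero j₀
    have hchain : ∀ t : ℕ, t < n → α₀ (j₀ + (t : ZMod n)) = 0 := by
      intro t
      induction t with
      | zero => intro _; simpa using hα₀
      | succ t ih =>
        intro htn
        have h1 := ih (by omega)
        have hne : j₀ + ((t + 1 : ℕ) : ZMod n) ≠ j₀ := by
          intro h
          have h2 : ((t + 1 : ℕ) : ZMod n) = 0 := by
            rwa [add_eq_left] at h
          exact hcast (t + 1) (by omega) htn h2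
        have h2 := hge _ hne α₀ hα₀s
        have hsubeq : j₀ + ((t + 1 : ℕ) : ZMod n) - 1 = j₀ + ((t : ℕ) : ZMod n) := by
          push_cast
          ring
        rw [hsubeq] at h2
        omega
    have hα₀0 : α₀ = 0 := by
      ext s
      have hval : (((s - j₀).val : ℕ) : ZMod n) = s - j₀ := ZMod.natCast_rightInverse (s - j₀)
      have h := hchain (s - j₀).val (ZMod.val_lt _)
      rw [hval] at h
      simpa using h
    have hr0 : r = 0 := by
      have := hdeg α₀ hα₀s
      rw [hα₀0, map_zero] at this
      omega
    apply hFk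
    refine ⟨coeff 0 F, ?_⟩
    apply MvPolynomial.ext
    intro d
    rw [coeff_C]
    by_cases hd : d = 0
    · rw [if_pos (by rw [hd]), hd]
    · rw [if_neg (fun h => hd h.symm)]
      by_contra h
      have hds := mem_support_iff.mpr (fun hh => h hh.symm)
      have := hdeg d hds
      rw [hr0, Finsupp.degree_eq_zero_iff] at this
      exact hd this
end
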